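/- arXiv:0907.2947 — 2 statements merged into one kernel-verified Lean document; each statement's English description precedes it below -/
import Mathlib

section
/- Suppose there exists 0 < η ≤ 1 such that for every cube Q there is E_Q ⊂ Q with w(E_Q) > η w(Q) and Q∖E_Q = ⋃_j Q_j a union of non-overlapping dyadic subcubes of Q. Let E_Q* = R_Q ∖ ⋃_j R_{Q_j} where R_Q = Q × (0, ℓ(Q)). If a measure μ on ℝⁿ × (0,∞) satisfies μ(E_Q*) ≤ C₁ w(Q) for all cubes Q, then μ(R_Q) ≤ (C₁/η) w(Q) for all cubes Q; i.e., μ is a w-Carleson measure. -/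
open MeasureTheory

/-- The axis-parallel cube with corner `c` and side length `l`. -/
def Cube (n : ℕ) (c : Fin n → ℝ) (l : ℝ) : Set (EuclideanSpace ℝ (Fin n)) :=
  {y | ∀ i, c i ≤ y i ∧ y i ≤ c i + l}

/-- The Carleson box `R_Q = Q × (0, ℓ(Q))` over the cube `Q`. -/
def CarlesonBox (n : ℕ) (c : Fin n → ℝ) (l : ℝ) : Set (EuclideanSpace ℝ (Fin n) × ℝ) :=
  Cube n c l ×ˢ Set.Ioo (0:ℝ) l

lemma cube_eq_preimage (n : ℕ) (c : Fin n → ℝ) (l : ℝ) :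
    Cube n c l = (EuclideanSpace.equiv (Fin n) ℝ) ⁻¹'
      (Set.univ.pi fun i => Set.Icc (c i) (c i + l)) := by
  ext y
  simp only [Cube, Set.mem_setOf_eq, Set.mem_preimage, Set.mem_pi, Set.mem_univ,
    Set.mem_Icc, forall_const]
  rfl

lemma cube_isCompact (n : ℕ) (c : Fin n → ℝ) (l : ℝ) : IsCompact (Cube n c l) := by
  rw [cube_eq_preimage]
  have h : IsCompact (Set.univ.pi fun i => Set.Icc (c i) (c i + l)) :=
    isCompact_univ_pi fun i => isCompact_Icc
  have h2 := h.image (EuclideanSpace.equiv (Fin n) ℝ).symm.continuous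
  convert h2 using 1
  ext y
  constructor
  · intro hy
    exact ⟨_, hy, (EuclideanSpace.equiv (Fin n) ℝ).symm_apply_apply y⟩
  · rintro ⟨z, hz, rfl⟩
    rw [Set.mem_preimage, ContinuousLinearEquiv.apply_symm_apply]
    exact hz

lemma cube_measurable (n : ℕ) (c : Fin n → ℝ) (l : ℝ) : MeasurableSet (Cube n c l) :=
  (cube_isCompact n c l).isClosed.measurableSet

lemma hyperplane_null (n : ℕ) (i : Fin n) (a : ℝ) :
    volume {y : EuclideanSpace ℝ (Fin n) | y i = a} = 0 := by
  have hmp := EuclideanSpace.volume_preserving_symm_measurableEquiv_toLp (Fin n)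
  have hA : MeasurableSet {y : Fin n → ℝ | y i = a} := by
    have : {y : Fin n → ℝ | y i = a} = (fun y : Fin n → ℝ => y i) ⁻¹' {a} := rfl
    rw [this]
    exact (measurable_pi_apply i) (measurableSet_singleton a)
  have he : {y : EuclideanSpace ℝ (Fin n) | y i = a}
      = (MeasurableEquiv.toLp 2 (Fin n → ℝ)).symm ⁻¹' {y : Fin n → ℝ | y i = a} := rfl
  rw [he, hmp.measure_preimage hA.nullMeasurableSet, volume_pi]
  exact Measure.pi_hyperplane (fun _ : Fin n => (volume : Measure ℝ)) i a

lemma cube_diff_interior_null (n : ℕ) (c : Fin n → ℝ) (l : ℝ) :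
    volume (Cube n c l \ interior (Cube n c l)) = 0 := by
  have hopen : IsOpen ((EuclideanSpace.equiv (Fin n) ℝ) ⁻¹'
      (Set.univ.pi fun i => Set.Ioo (c i) (c i + l))) :=
    (isOpen_set_pi Set.finite_univ fun i _ => isOpen_Ioo).preimage
      (EuclideanSpace.equiv (Fin n) ℝ).continuous
  have hsub : (EuclideanSpace.equiv (Fin n) ℝ) ⁻¹'
      (Set.univ.pi fun i => Set.Ioo (c i) (c i + l)) ⊆ interior (Cube n c l) := by
    apply hopen.subset_interior_iff.mpr
    intro y hy i
    have h := hy i (Set.mem_univ i)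
    exact ⟨le_of_lt h.1, le_of_lt h.2⟩
  have hcov : Cube n c l \ interior (Cube n c l) ⊆ ⋃ i : Fin n,
      ({y : EuclideanSpace ℝ (Fin n) | y i = c i} ∪ {y | y i = c i + l}) := by
    intro y hy
    obtain ⟨hy1, hy2⟩ := hy
    have hne : ¬ (∀ i : Fin n, c i < y i ∧ y i < c i + l) := by
      intro hcon
      exact hy2 (hsub (fun i _ => hcon i))
    push_neg at hne
    obtain ⟨i, hi⟩ := hne
    refine Set.mem_iUnion.2 ⟨i, ?_⟩
    rcases (hy1 i).1.eq_or_lt with h | h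
    · exact Or.inl h.symm
    · exact Or.inr (le_antisymm (hy1 i).2 (hi h))
  refine measure_mono_null hcov ?_
  refine measure_iUnion_null fun i => measure_union_null ?_ ?_ <;>
    apply hyperplane_null


lemma mem_cube_symm (n : ℕ) (c : Fin n → ℝ) (l : ℝ) (f : Fin n → ℝ) :
    (WithLp.equiv 2 (Fin n → ℝ)).symm f ∈ Cube n c l ↔ ∀ i, c i ≤ f i ∧ f i ≤ c i + l :=
  Iff.rfl

/-- Sawtooth criterion for Carleson measures: if for every cube `Q` there is `E_Q ⊆ Q` with
`w(E_Q) > η w(Q)` whose complement `Q ∖ E_Q` is a union of non-overlapping dyadic subcubes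
`Q_j` of `Q`, and `μ(E_Q*) ≤ C₁ w(Q)` where `E_Q* = R_Q ∖ ⋃ R_{Q_j}`, then
`μ(R_Q) ≤ (C₁/η) w(Q)` for all `Q`, i.e. `μ` is a `w`-Carleson measure. -/
theorem stmt11 (n : ℕ) (hn : 0 < n) (w : EuclideanSpace ℝ (Fin n) → ℝ)
    (hw : ∀ x, 0 < w x) (hwi : LocallyIntegrable w volume)
    (μ : Measure (EuclideanSpace ℝ (Fin n) × ℝ)) (η C₁ : ℝ)
    (hη : 0 < η) (hη1 : η ≤ 1) (hC₁ : 0 ≤ C₁)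
    (H : ∀ (c : Fin n → ℝ) (l : ℝ), 0 < l →
      ∃ (E : Set (EuclideanSpace ℝ (Fin n))) (J : Set ℕ)
        (qc : ℕ → Fin n → ℝ) (ql : ℕ → ℝ),
        E ⊆ Cube n c l ∧ MeasurableSet E ∧
        η * (∫ x in Cube n c l, w x) < ∫ x in E, w x ∧
        Cube n c l \ E = ⋃ j ∈ J, Cube n (qc j) (ql j) ∧
        (∀ j ∈ J, ∃ k : ℕ, ql j = l / 2 ^ k ∧
          ∃ m : Fin n → ℕ, ∀ i, qc j i = c i + m i * (l / 2 ^ k)) ∧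
        (∀ j ∈ J, ∀ j' ∈ J, j ≠ j' →
          interior (Cube n (qc j) (ql j)) ∩ interior (Cube n (qc j') (ql j')) = ∅) ∧
        μ (CarlesonBox n c l \ ⋃ j ∈ J, CarlesonBox n (qc j) (ql j)) ≤
          ENNReal.ofReal (C₁ * ∫ x in Cube n c l, w x)) :
    ∀ (c : Fin n → ℝ) (l : ℝ), 0 < l →
      μ (CarlesonBox n c l) ≤ ENNReal.ofReal ((C₁ / η) * ∫ x in Cube n c l, w x) := by
  classical
  set ν : Measure (EuclideanSpace ℝ (Fin n)) :=
    volume.withDensity (fun x => ENNReal.ofReal (w x)) with hνdef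
  have hint : ∀ (c : Fin n → ℝ) (l : ℝ), IntegrableOn w (Cube n c l) volume :=
    fun c l => hwi.integrableOn_isCompact (cube_isCompact n c l)
  have hνs : ∀ (s : Set (EuclideanSpace ℝ (Fin n))), MeasurableSet s →
      IntegrableOn w s volume → ν s = ENNReal.ofReal (∫ x in s, w x) := by
    intro s hs hi
    rw [hνdef, withDensity_apply _ hs,
      ← ofReal_integral_eq_lintegral_ofReal hi (Filter.Eventually.of_forall fun x => (hw x).le)]
  have hνcube : ∀ (c : Fin n → ℝ) (l : ℝ),
      ν (Cube n c l) = ENNReal.ofReal (∫ x in Cube n c l, w x) :=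
    fun c l => hνs _ (cube_measurable n c l) (hint c l)
  have hInonneg : ∀ (c : Fin n → ℝ) (l : ℝ), 0 ≤ ∫ x in Cube n c l, w x := fun c l =>
    setIntegral_nonneg (cube_measurable n c l) fun x _ => (hw x).le
  have hνint : ∀ (c : Fin n → ℝ) (l : ℝ),
      ν (Cube n c l) = ν (interior (Cube n c l)) := by
    intro c l
    have h0 : ν (Cube n c l \ interior (Cube n c l)) = 0 :=
      (withDensity_absolutelyContinuous volume _) (cube_diff_interior_null n c l)
    refine le_antisymm ?_ (measure_mono interior_subset)
    calc ν (Cube n c l)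
        ≤ ν (interior (Cube n c l) ∪ (Cube n c l \ interior (Cube n c l))) := by
          refine measure_mono fun y hy => ?_
          by_cases h : y ∈ interior (Cube n c l)
          · exact Or.inl h
          · exact Or.inr ⟨hy, h⟩
      _ ≤ ν (interior (Cube n c l)) + ν (Cube n c l \ interior (Cube n c l)) :=
          measure_union_le _ _
      _ = ν (interior (Cube n c l)) := by rw [h0, add_zero]
  have hAnonneg : ∀ N : ℕ, 0 ≤ ∑ i ∈ Finset.range N, (1 - η) ^ i := fun N =>
    Finset.sum_nonneg fun i _ => pow_nonneg (by linarith) i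
  -- main induction
  have key : ∀ N : ℕ, ∀ (c : Fin n → ℝ) (l : ℝ), 0 < l →
      μ (CarlesonBox n c l ∩ {p : EuclideanSpace ℝ (Fin n) × ℝ | l / 2 ^ N < p.2}) ≤
        ENNReal.ofReal C₁ * ENNReal.ofReal (∑ i ∈ Finset.range N, (1 - η) ^ i) *
          ν (Cube n c l) := by
    intro N
    induction N with
    | zero =>
      intro c l hl
      have he : CarlesonBox n c l ∩ {p : EuclideanSpace ℝ (Fin n) × ℝ | l / 2 ^ 0 < p.2}
          = ∅ := by
        refine Set.eq_empty_iff_forall_notMem.mpr fun p hp => ?_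
        have h1 : p.2 < l := hp.1.2.2
        have h2 : l / 2 ^ 0 < p.2 := hp.2
        simp only [pow_zero, div_one] at h2
        linarith
      rw [he, measure_empty]
      exact zero_le
    | succ N ih =>
      intro c l hl
      obtain ⟨E, J, qc, ql, hEQ, hEm, hEw, hQE, hdyad, hdisj, hμE⟩ := H c l hl
      have hsubQ : ∀ j ∈ J, Cube n (qc j) (ql j) ⊆ Cube n c l \ E := by
        intro j hj
        rw [hQE]
        exact Set.subset_biUnion_of_mem (u := fun j => Cube n (qc j) (ql j)) hj
      -- every subcube is a strict subcube : k ≥ 1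
      have hk1 : ∀ j ∈ J, ∃ k : ℕ, 1 ≤ k ∧ ql j = l / 2 ^ k := by
        intro j hj
        obtain ⟨k, hk, m, hm⟩ := hdyad j hj
        refine ⟨k, ?_, hk⟩
        by_contra hk0
        push_neg at hk0
        have hk00 : k = 0 := by omega
        subst hk00
        have hql : ql j = l := by simpa using hk
        have hcorner : (WithLp.equiv 2 (Fin n → ℝ)).symm (qc j) ∈ Cube n (qc j) (ql j) := by
          rw [mem_cube_symm]
          intro i
          constructor
          · exact le_refl _
          · rw [hql]; linarith
        have hfar : (WithLp.equiv 2 (Fin n → ℝ)).symm (fun i => qc j i + ql j) ∈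
            Cube n (qc j) (ql j) := by
          rw [mem_cube_symm]
          intro i
          constructor
          · rw [hql]; linarith
          · exact le_refl _
        have h1 := (hsubQ j hj hcorner).1
        have h2 := (hsubQ j hj hfar).1
        rw [mem_cube_symm] at h1 h2
        have hqceq : ∀ i, qc j i = c i := by
          intro i
          have := (h1 i).1
          have := (h2 i).2
          rw [hql] at *
          linarith [(h1 i).1, (h2 i).2]
        have hQeq : Cube n (qc j) (ql j) = Cube n c l := by
          unfold Cube
          ext y
          simp only [Set.mem_setOf_eq]
          constructor <;> intro hy i <;> have := hy i <;> rw [hqceq i, hql] at * <;>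
            exact this
        have hEempty : ∀ x, x ∉ E := by
          intro x hx
          have hxQ : x ∈ Cube n c l := hEQ hx
          have : x ∈ Cube n c l \ E := hsubQ j hj (hQeq ▸ hxQ)
          exact this.2 hx
        have hE0 : E = ∅ := Set.eq_empty_iff_forall_notMem.mpr hEempty
        rw [hE0] at hEw
        simp only [Measure.restrict_empty, integral_zero_measure] at hEw
        have := hInonneg c l
        nlinarith
      have hqlpos : ∀ j ∈ J, 0 < ql j := by
        intro j hj
        obtain ⟨k, _, hk⟩ := hk1 j hj
        rw [hk]; positivity
      -- the subcube threshold inclusion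
      have hthresh : ∀ j ∈ J, l / 2 ^ (N + 1) ≥ ql j / 2 ^ N := by
        intro j hj
        obtain ⟨k, hk1', hk⟩ := hk1 j hj
        rw [hk, div_div, ← pow_add]
        have h2 : (2:ℝ) ^ (N + 1) ≤ 2 ^ (k + N) := by
          apply pow_le_pow_right₀ one_le_two
          omega
        exact div_le_div_of_nonneg_left hl.le (by positivity) h2
      -- covering
      set T : Set (EuclideanSpace ℝ (Fin n) × ℝ) := {p | l / 2 ^ (N + 1) < p.2} with hT
      have hcover : CarlesonBox n c l ∩ T ⊆
          (CarlesonBox n c l \ ⋃ j ∈ J, CarlesonBox n (qc j) (ql j)) ∪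
          ⋃ j ∈ J, (CarlesonBox n (qc j) (ql j) ∩ T) := by
        rintro p ⟨hp, hpt⟩
        by_cases hU : p ∈ ⋃ j ∈ J, CarlesonBox n (qc j) (ql j)
        · obtain ⟨j, hj, hpj⟩ := Set.mem_iUnion₂.mp hU
          exact Or.inr (Set.mem_iUnion₂.mpr ⟨j, hj, hpj, hpt⟩)
        · exact Or.inl ⟨hp, hU⟩
      -- sum over subcubes
      have hsum : ∑' j : J, ν (Cube n (qc j) (ql j)) ≤
          ENNReal.ofReal ((1 - η) * ∫ x in Cube n c l, w x) := by
        have hdisjP : (J : Set ℕ).PairwiseDisjoint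
            (fun j => interior (Cube n (qc j) (ql j))) := by
          intro j hj j' hj' hne
          rw [Function.onFun, Set.disjoint_iff_inter_eq_empty]
          exact hdisj j hj j' hj' hne
        have h1 : ∑' j : J, ν (Cube n (qc j) (ql j))
            = ∑' j : J, ν (interior (Cube n (qc j) (ql j))) :=
          tsum_congr fun j => hνint _ _
        have h2 : ∑' j : J, ν (interior (Cube n (qc j) (ql j)))
            = ν (⋃ j ∈ J, interior (Cube n (qc j) (ql j))) :=
          (measure_biUnion (Set.to_countable J) hdisjP
            fun j _ => isOpen_interior.measurableSet).symm
        have h3 : ν (⋃ j ∈ J, interior (Cube n (qc j) (ql j))) ≤ ν (Cube n c l \ E) := by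
          refine measure_mono ?_
          refine Set.iUnion₂_subset fun j hj => ?_
          exact (interior_subset).trans (hsubQ j hj)
        have h4 : ν (Cube n c l \ E) ≤
            ENNReal.ofReal ((1 - η) * ∫ x in Cube n c l, w x) := by
          have hmeas : MeasurableSet (Cube n c l \ E) := (cube_measurable n c l).diff hEm
          have hiE : IntegrableOn w E volume := (hint c l).mono_set hEQ
          have hiD : IntegrableOn w (Cube n c l \ E) volume :=
            (hint c l).mono_set Set.diff_subset
          rw [hνs _ hmeas hiD]
          apply ENNReal.ofReal_le_ofReal
          have hsplit : ∫ x in Cube n c l, w x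
              = (∫ x in E, w x) + ∫ x in Cube n c l \ E, w x := by
            rw [← setIntegral_union Set.disjoint_sdiff_right hmeas hiE hiD,
              Set.union_diff_cancel hEQ]
          nlinarith [hEw]
        rw [h1, h2]
        exact h3.trans h4
      -- main chain
      calc μ (CarlesonBox n c l ∩ T)
          ≤ μ ((CarlesonBox n c l \ ⋃ j ∈ J, CarlesonBox n (qc j) (ql j)) ∪
              ⋃ j ∈ J, (CarlesonBox n (qc j) (ql j) ∩ T)) := measure_mono hcover
        _ ≤ μ (CarlesonBox n c l \ ⋃ j ∈ J, CarlesonBox n (qc j) (ql j)) +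
              μ (⋃ j ∈ J, (CarlesonBox n (qc j) (ql j) ∩ T)) := measure_union_le _ _
        _ ≤ ENNReal.ofReal (C₁ * ∫ x in Cube n c l, w x) +
              ∑' j : J, μ (CarlesonBox n (qc j) (ql j) ∩ T) :=
            add_le_add hμE (measure_biUnion_le μ (Set.to_countable J) _)
        _ ≤ ENNReal.ofReal (C₁ * ∫ x in Cube n c l, w x) +
              ∑' j : J, (ENNReal.ofReal C₁ *
                ENNReal.ofReal (∑ i ∈ Finset.range N, (1 - η) ^ i) *
                ν (Cube n (qc (j : ℕ)) (ql (j : ℕ)))) := by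
            refine add_le_add_right (ENNReal.tsum_le_tsum fun j => ?_) _
            have hss : CarlesonBox n (qc (j : ℕ)) (ql (j : ℕ)) ∩ T ⊆
                CarlesonBox n (qc (j : ℕ)) (ql (j : ℕ)) ∩
                  {p : EuclideanSpace ℝ (Fin n) × ℝ | ql (j : ℕ) / 2 ^ N < p.2} := by
              rintro p ⟨hp, hpt⟩
              exact ⟨hp, lt_of_le_of_lt (hthresh j j.2) hpt⟩
            exact (measure_mono hss).trans (ih (qc j) (ql j) (hqlpos j j.2))
        _ = ENNReal.ofReal (C₁ * ∫ x in Cube n c l, w x) +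
              ENNReal.ofReal C₁ * ENNReal.ofReal (∑ i ∈ Finset.range N, (1 - η) ^ i) *
                ∑' j : J, ν (Cube n (qc (j : ℕ)) (ql (j : ℕ))) := by
            rw [ENNReal.tsum_mul_left]
        _ ≤ ENNReal.ofReal (C₁ * ∫ x in Cube n c l, w x) +
              ENNReal.ofReal C₁ * ENNReal.ofReal (∑ i ∈ Finset.range N, (1 - η) ^ i) *
                ENNReal.ofReal ((1 - η) * ∫ x in Cube n c l, w x) := by
            gcongr
        _ ≤ ENNReal.ofReal C₁ *
              ENNReal.ofReal (∑ i ∈ Finset.range (N + 1), (1 - η) ^ i) *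
              ν (Cube n c l) := by
            rw [hνcube c l]
            set I := ∫ x in Cube n c l, w x
            rw [← ENNReal.ofReal_mul hC₁, ← ENNReal.ofReal_mul
              (mul_nonneg hC₁ (hAnonneg N)), ← ENNReal.ofReal_mul hC₁,
              ← ENNReal.ofReal_mul (mul_nonneg hC₁ (hAnonneg (N + 1))),
              ← ENNReal.ofReal_add (mul_nonneg hC₁ (hInonneg c l))
                (mul_nonneg (mul_nonneg hC₁ (hAnonneg N))
                  (mul_nonneg (by linarith) (hInonneg c l)))]
            apply ENNReal.ofReal_le_ofReal
            rw [geom_sum_succ]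
            apply le_of_eq
            ring
  -- conclusion
  intro c l hl
  have hA : ∀ N : ℕ, (∑ i ∈ Finset.range N, (1 - η) ^ i) ≤ 1 / η := by
    intro N
    have h2 : (0:ℝ) ≤ (1 - η) ^ N := pow_nonneg (by linarith) N
    rw [le_div_iff₀ hη]
    nlinarith [geom_sum_mul (1 - η) N]
  have hmono : Monotone
      (fun N : ℕ => CarlesonBox n c l ∩
        {p : EuclideanSpace ℝ (Fin n) × ℝ | l / 2 ^ N < p.2}) := by
    intro N M hNM p hp
    have hle : l / 2 ^ M ≤ l / 2 ^ N :=
      div_le_div_of_nonneg_left hl.le (by positivity) (pow_le_pow_right₀ one_le_two hNM)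
    exact ⟨hp.1, lt_of_le_of_lt hle hp.2⟩
  have hunion : (⋃ N : ℕ, CarlesonBox n c l ∩
      {p : EuclideanSpace ℝ (Fin n) × ℝ | l / 2 ^ N < p.2}) = CarlesonBox n c l := by
    refine subset_antisymm (Set.iUnion_subset fun N => Set.inter_subset_left) fun p hp => ?_
    have hp2 : 0 < p.2 := hp.2.1
    obtain ⟨N, hN⟩ := exists_pow_lt_of_lt_one (div_pos hp2 hl) (by norm_num : (1:ℝ)/2 < 1)
    refine Set.mem_iUnion.mpr ⟨N, hp, ?_⟩
    have : l / 2 ^ N = (1/2) ^ N * l := by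
      rw [div_pow, one_pow, div_mul_eq_mul_div, one_mul]
    rw [Set.mem_setOf_eq, this]
    calc (1/2 : ℝ) ^ N * l < (p.2 / l) * l := by
          apply mul_lt_mul_of_pos_right hN hl
      _ = p.2 := div_mul_cancel₀ _ hl.ne'
  rw [← hunion, hmono.directed_le.measure_iUnion]
  refine iSup_le fun N => (key N c l hl).trans ?_
  rw [hνcube c l]
  rw [← ENNReal.ofReal_mul hC₁, ← ENNReal.ofReal_mul
    (mul_nonneg hC₁ (hAnonneg N))]
  apply ENNReal.ofReal_le_ofReal
  have := hA N
  have hI := hInonneg c l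
  have h1 : C₁ * (∑ i ∈ Finset.range N, (1 - η) ^ i) ≤ C₁ / η := by
    calc C₁ * (∑ i ∈ Finset.range N, (1 - η) ^ i) ≤ C₁ * (1 / η) := by
          exact mul_le_mul_of_nonneg_left this hC₁
      _ = C₁ / η := by ring
  exact mul_le_mul_of_nonneg_right h1 hI
end

section
/- Let ν ∈ ℂⁿ with |ν| = 1, 0 < ε ≤ 1/16, and let z, a ∈ ℂⁿ satisfy z ∈ Γ_ν = {z : |z − ν(z·ν̄)| < ε|z·ν̄|}, Re(ν·a) > 3/4, and |a| ≤ 1/(8ε). Then |z·a| ≥ (5/8)|z·ν̄| ≥ (1/2)|z|. -/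
open MeasureTheory

lemma bilin_cs (n : ℕ) (u v : EuclideanSpace ℂ (Fin n)) :
    ‖∑ i, u i * v i‖ ≤ ‖u‖ * ‖v‖ := by
  set u' : EuclideanSpace ℂ (Fin n) := WithLp.toLp 2 (fun i => (starRingEnd ℂ) (u i)) with hu'
  have h1 : (inner ℂ u' v : ℂ) = ∑ i, u i * v i := by
    simp [PiLp.inner_apply, hu', RCLike.inner_apply, mul_comm]
  have h2 : ‖u'‖ = ‖u‖ := by
    simp [EuclideanSpace.norm_eq, hu']
  calc ‖∑ i, u i * v i‖ = ‖(inner ℂ u' v : ℂ)‖ := by rw [h1]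
    _ ≤ ‖u'‖ * ‖v‖ := norm_inner_le_norm u' v
    _ = ‖u‖ * ‖v‖ := by rw [h2]

/-- Cone estimate: if `|ν| = 1`, `0 < ε ≤ 1/16`, `z ∈ Γ_ν` (the `ε`-cone around `ν`),
`Re(ν·a) > 3/4` and `|a| ≤ 1/(8ε)`, then `|z·a| ≥ (5/8)|z·ν̄| ≥ (1/2)|z|`.
Here `z·ν̄ = ⟪ν, z⟫` is the Hermitian pairing and `z·a = ∑ zᵢ aᵢ` the bilinear pairing. -/
theorem stmt13 (n : ℕ) (ν z a : EuclideanSpace ℂ (Fin n)) (ε : ℝ)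
    (hν : ‖ν‖ = 1) (hε : 0 < ε) (hε' : ε ≤ 1 / 16)
    (hz : ‖z - (inner ℂ ν z : ℂ) • ν‖ < ε * ‖(inner ℂ ν z : ℂ)‖)
    (ha : 3 / 4 < (∑ i, ν i * a i).re)
    (haa : ‖a‖ ≤ 1 / (8 * ε)) :
    5 / 8 * ‖(inner ℂ ν z : ℂ)‖ ≤ ‖∑ i, z i * a i‖ ∧
    1 / 2 * ‖z‖ ≤ 5 / 8 * ‖(inner ℂ ν z : ℂ)‖ := by
  set w : ℂ := (inner ℂ ν z : ℂ) with hw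
  have hw0 : (0:ℝ) ≤ ‖w‖ := norm_nonneg _
  have ha0 : (0:ℝ) ≤ ‖a‖ := norm_nonneg _
  -- decomposition
  set S : ℂ := ∑ i, ν i * a i with hS
  set E : ℂ := ∑ i, (z - w • ν) i * a i with hE
  have hdec : (∑ i, z i * a i) = w * S + E := by
    simp only [hS, hE, PiLp.sub_apply, PiLp.smul_apply, smul_eq_mul,
      Finset.mul_sum, ← Finset.sum_add_distrib]
    congr 1; ext i; ring
  -- bound E
  have hEbound : ‖E‖ ≤ ‖w‖ / 8 := by
    calc ‖E‖ ≤ ‖z - w • ν‖ * ‖a‖ := bilin_cs n _ a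
      _ ≤ (ε * ‖w‖) * (1 / (8 * ε)) := by
          apply mul_le_mul hz.le haa ha0
          positivity
      _ = ‖w‖ / 8 := by field_simp
  -- bound S
  have hSbound : 3 / 4 ≤ ‖S‖ := by
    have := Complex.abs_re_le_norm S
    have h2 := le_abs_self S.re
    rw [hS] at *
    calc (3:ℝ)/4 ≤ (∑ i, ν i * a i).re := ha.le
      _ ≤ |(∑ i, ν i * a i).re| := le_abs_self _
      _ ≤ ‖∑ i, ν i * a i‖ := Complex.abs_re_le_norm _
  have h1 : 5 / 8 * ‖w‖ ≤ ‖∑ i, z i * a i‖ := by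
    have hws : ‖w * S‖ = ‖w‖ * ‖S‖ := norm_mul _ _
    have htri : ‖w * S‖ ≤ ‖∑ i, z i * a i‖ + ‖E‖ := by
      calc ‖w * S‖ = ‖(w * S + E) - E‖ := by ring_nf
        _ ≤ ‖w * S + E‖ + ‖E‖ := norm_sub_le _ _
        _ = ‖∑ i, z i * a i‖ + ‖E‖ := by rw [hdec]
    have hwS : ‖w‖ * (3/4) ≤ ‖w * S‖ := by
      rw [hws]; exact mul_le_mul_of_nonneg_left hSbound hw0
    nlinarith
  refine ⟨h1, ?_⟩
  have hzn : ‖z‖ ≤ (1 + ε) * ‖w‖ := by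
    calc ‖z‖ = ‖(z - w • ν) + w • ν‖ := by rw [sub_add_cancel]
      _ ≤ ‖z - w • ν‖ + ‖w • ν‖ := norm_add_le _ _
      _ ≤ ε * ‖w‖ + ‖w‖ * 1 := by
          rw [norm_smul, hν]
          exact add_le_add hz.le le_rfl
      _ = (1 + ε) * ‖w‖ := by ring
  nlinarith
end
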